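/- The system S_{z,λ,1} (identity permutation boundary conditions) has exactly one admissible state, and its Boltzmann weight is z^{λ+ρ}. -/

import Mathlib

abbrev LP (r : ℕ) := AddMonoidAlgebra ℚ (Fin r → ℤ)

noncomputable def mono {r : ℕ} (μ : Fin r → ℤ) : LP r := .ofCoeff (Finsupp.single μ (1 : ℚ))

/-- The simple reflection `s_i` of `S_r`, swapping `i` and `i+1` (0-based). -/
def sPerm (r i : ℕ) : Equiv.Perm (Fin r) :=
  if h : i + 1 < r then Equiv.swap ⟨i, Nat.lt_of_succ_lt h⟩ ⟨i + 1, h⟩ else 1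

/-- The simple root `α_i = e_i - e_{i+1}`. -/
def alph (r i : ℕ) : Fin r → ℤ :=
  if h : i + 1 < r then Pi.single ⟨i, Nat.lt_of_succ_lt h⟩ 1 - Pi.single ⟨i + 1, h⟩ 1 else 0

/-- The pairing `⟨μ, α_i^∨⟩ = μ_i - μ_{i+1}`. -/
def pair (r i : ℕ) (μ : Fin r → ℤ) : ℤ :=
  if h : i + 1 < r then μ ⟨i, Nat.lt_of_succ_lt h⟩ - μ ⟨i + 1, h⟩ else 0

/-- The isobaric Demazure operator `∂_i` on the monomial `z^μ`, given by the standard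
explicit formula equivalent to `∂_i f(z) = (f(z) - z^{-α_i} f(s_i z))/(1 - z^{-α_i})`. -/
noncomputable def demMono (r i : ℕ) (μ : Fin r → ℤ) : LP r :=
  if 0 ≤ pair r i μ then ∑ t ∈ Finset.range ((pair r i μ).toNat + 1), mono (μ - t • alph r i)
  else if pair r i μ = -1 then 0
  else -∑ t ∈ Finset.range ((-pair r i μ).toNat - 1), mono (μ + (t + 1) • alph r i)

/-- The isobaric Demazure operator `∂_i` on Laurent polynomials, extended linearly. -/
noncomputable def dem (r i : ℕ) (f : LP r) : LP r :=
  Finsupp.sum f.coeff fun μ c => c • demMono r i μ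

/-- The modified Demazure operator `∂°_i = ∂_i - 1`. -/
noncomputable def demC (r i : ℕ) (f : LP r) : LP r := dem r i f - f

/-- The action of `s_i` on Laurent polynomials: `(s_i f)(z) = f(s_i z)`. -/
noncomputable def sAct (r i : ℕ) (f : LP r) : LP r :=
  .ofCoeff (Finsupp.mapDomain (fun μ => μ ∘ (sPerm r i)) f.coeff)

/-- `∂_w = ∂_{i_1} ⋯ ∂_{i_k}` along a word `(i_1, …, i_k)`. -/
noncomputable def demWord (r : ℕ) : List ℕ → LP r → LP r
  | [], f => f
  | i :: l, f => dem r i (demWord r l f)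

/-- `∂°_w = ∂°_{i_1} ⋯ ∂°_{i_k}` along a word `(i_1, …, i_k)`. -/
noncomputable def demCWord (r : ℕ) : List ℕ → LP r → LP r
  | [], f => f
  | i :: l, f => demC r i (demCWord r l f)

/-- All letters of the word are valid indices of simple reflections of `S_r`. -/
def OKWord (r : ℕ) (l : List ℕ) : Prop := ∀ i ∈ l, i + 1 < r

def wordProd (r : ℕ) (l : List ℕ) : Equiv.Perm (Fin r) := (l.map (sPerm r)).prod

/-- Coxeter length of a permutation. -/
noncomputable def len (r : ℕ) (w : Equiv.Perm (Fin r)) : ℕ :=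
  sInf {n | ∃ l : List ℕ, OKWord r l ∧ wordProd r l = w ∧ l.length = n}

/-- `l` is a reduced word. -/
def Reduced (r : ℕ) (l : List ℕ) : Prop :=
  OKWord r l ∧ l.length = len r (wordProd r l)

/-- Bruhat order on `S_r`, via the subword characterization. -/
def bruhatLE (r : ℕ) (y w : Equiv.Perm (Fin r)) : Prop :=
  ∃ l : List ℕ, Reduced r l ∧ wordProd r l = w ∧
    ∃ l' : List ℕ, l'.Sublist l ∧ wordProd r l' = y

/-- The Young diagram of a partition `λ` with at most `r` parts. -/
noncomputable def lamDiag {r : ℕ} (lam : Fin r → ℕ)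
    (h : (List.ofFn lam).Pairwise (· ≥ ·)) : YoungDiagram :=
  YoungDiagram.ofRowLens (List.ofFn lam) (List.sortedGE_iff_pairwise.mpr h)

/-- The number of entries `< m` in row `j` of the tableau `T`; since rows weakly
increase, this is the length of row `j` of the tableau obtained from `T` by deleting
all entries `≥ m`. -/
def cntLt {μ : YoungDiagram} (T : SemistandardYoungTableau μ) (j m : ℕ) : ℕ :=
  ((Finset.range (μ.rowLen j)).filter (fun k => T j k < m)).card

/-- The weight of a tableau: `wtT T m` is the number of entries equal to `m`.
(Entries are 0-based: the letter `m ∈ {0, …, r-1}` corresponds to `m+1 ∈ {1, …, r}`.) -/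
def wtT {μ : YoungDiagram} (T : SemistandardYoungTableau μ) (m : ℕ) : ℕ :=
  (μ.cells.filter (fun c => T c.1 c.2 = m)).card

/-- A Gelfand-Tsetlin pattern with `r` rows and top row `λ`: a triangular array
`(a i j)`, rows `i = 0, …, r-1` (from the top), with `a i j` defined for
`i ≤ j ≤ r-1` (and normalized to `0` outside the triangle), top row `λ`, and the
interlacing inequalities `a i j ≥ a (i+1) (j+1) ≥ a i (j+1)`. -/
structure GTPattern (r : ℕ) (lam : Fin r → ℕ) where
  a : ℕ → ℕ → ℕ
  top : ∀ j : Fin r, a 0 (j : ℕ) = lam j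
  interlace : ∀ i j : ℕ, i ≤ j → j + 1 < r →
    a (i + 1) (j + 1) ≤ a i j ∧ a i (j + 1) ≤ a (i + 1) (j + 1)
  outside : ∀ i j : ℕ, ¬(i ≤ j ∧ j < r) → a i j = 0

/-- The sum of the `i`-th row of a Gelfand-Tsetlin pattern. -/
def GTPattern.rowSum {r : ℕ} {lam : Fin r → ℕ} (P : GTPattern r lam) (i : ℕ) : ℕ :=
  ∑ j ∈ Finset.Ico i r, P.a i j

/-- `true` = spin −, `false` = spin +.  The admissible five-vertex configurations
`(left, top, right, bottom)`: spin is conserved, and the type-`b₁` configuration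
`(+,−,+,−)` is forbidden.  This leaves exactly the five configurations
`(+,+,+,+)`, `(−,−,−,−)`, `(−,+,−,+)`, `(−,+,+,−)`, `(+,−,−,+)`. -/
def admU (a b c d : Bool) : Prop :=
  ((if a then 1 else 0) + (if b then 1 else 0) : ℕ)
      = (if c then 1 else 0) + (if d then 1 else 0) ∧
  ¬(a = false ∧ b = true ∧ c = false ∧ d = true)

/-- A state of the uncolored five-vertex model `S_{z,λ}`: a grid with rows
`0, …, r-1` (top to bottom) and columns labeled `0, …, N` from *right to left*.
`V i j` is the spin on the vertical edge in column (label) `j` between row `i-1`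
and row `i` (`V 0` is the top boundary, `V r` the bottom); `H i k` is the spin on
the `k`-th horizontal edge of row `i`, counted from the left (`H i 0` is the left
boundary, `H i (N+1)` the right boundary).  The vertex of row `i` and column label
`j` has left edge `H i (N-j)`, top edge `V i j`, right edge `H i (N-j+1)` and
bottom edge `V (i+1) j`.  Boundary conditions: the top boundary has `−` exactly in
the columns labeled `λ_i + r - 1 - i` (0-based `i`), the left and bottom boundary
are `+`, the right boundary is `−`. -/
structure UState (r N : ℕ) (lam : Fin r → ℕ) where
  V : Fin (r + 1) → Fin (N + 1) → Bool
  H : Fin r → Fin (N + 2) → Bool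
  top : ∀ j : Fin (N + 1), V 0 j = true ↔ ∃ i : Fin r, (j : ℕ) = lam i + (r - 1 - (i : ℕ))
  bottom : ∀ j, V (Fin.last r) j = false
  left : ∀ i, H i 0 = false
  right : ∀ i, H i (Fin.last (N + 1)) = true
  adm : ∀ (i : Fin r) (j : Fin (N + 1)),
    admU (H i ⟨N - (j : ℕ), by omega⟩) (V i.castSucc j)
      (H i ⟨N - (j : ℕ) + 1, by omega⟩) (V i.succ j)

/-- The Boltzmann weight of a state: a vertex in row `i` contributes `z_i` exactly
when the spin on the edge to its left is `−`, otherwise `1`. -/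
noncomputable def uweight {r N : ℕ} {lam : Fin r → ℕ} (s : UState r N lam) : LP r :=
  ∏ i : Fin r, ∏ k : Fin (N + 1),
    if s.H i k.castSucc then mono (Pi.single i 1) else 1

/-- The partition function of the uncolored five-vertex model. -/
noncomputable def Zpart (r N : ℕ) (lam : Fin r → ℕ) : LP r :=
  ∑ᶠ s : UState r N lam, uweight s

/-- The Weyl vector `ρ = (r-1, r-2, …, 0)`. -/
def rhoWt (r : ℕ) : Fin r → ℤ := fun i => ((r - 1 - (i : ℕ) : ℕ) : ℤ)

/-- The Schur polynomial `s_λ(z_1, …, z_r)` as a Laurent polynomial, via its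
combinatorial definition: the sum of `z^{wt T}` over semistandard Young tableaux of
shape `λ` with entries in `{1, …, r}` (0-based: entries `< r`). -/
noncomputable def schurL (r : ℕ) (μ : YoungDiagram) : LP r :=
  ∑ᶠ T : {T : SemistandardYoungTableau μ // ∀ c ∈ μ.cells, T.1 c.1 c.2 < r},
    mono fun i => (wtT T.1 (i : ℕ) : ℤ)

/-- Colored spins: `none` is the spin `+`, and `some c` is a `−` spin carrying the
colour `c_{c+1}` (0-based `c`); the colours are ordered `c_1 > c_2 > ⋯ > c_r`, so a
*smaller* index means a *larger* colour.  Admissible colored configurations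
`(left, top, right, bottom)`: type `a₁` (all `+`); type `a₂` (left and top colored,
the larger colour exits right and the smaller colour exits bottom — in indices,
right is the `min` and bottom is the `max`); types `b₂`/`c₁` (colored path entering
on the left and exiting right or bottom); type `c₂` (entering on top and exiting
right).  The type-`b₁` configuration (entering on top and exiting bottom with `+`
horizontally) is forbidden, as is everything else. -/
def admC (r : ℕ) (a b c d : Option (Fin r)) : Prop :=
  (a = none ∧ b = none ∧ c = none ∧ d = none) ∨
  (∃ x y : Fin r, a = some x ∧ b = some y ∧ c = some (min x y) ∧ d = some (max x y)) ∨
  (∃ x : Fin r, a = some x ∧ b = none ∧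
    ((c = some x ∧ d = none) ∨ (c = none ∧ d = some x))) ∨
  (∃ x : Fin r, a = none ∧ b = some x ∧ c = some x ∧ d = none)

/-- A state of the colored five-vertex model `S_{z,λ,w}`; grid coordinates as in the
uncolored model.  Boundary conditions: the top boundary carries colour `c_{i+1}`
(i.e. `some i`) exactly in the column labeled `λ_i + r - 1 - i` (0-based `i`); the
right boundary carries, from top to bottom, the colours `w c` (row `i` carries
`some (w⁻¹ i)`); all other boundary edges are `+`. -/
structure CState (r N : ℕ) (lam : Fin r → ℕ) (w : Equiv.Perm (Fin r)) where
  V : Fin (r + 1) → Fin (N + 1) → Option (Fin r)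
  H : Fin r → Fin (N + 2) → Option (Fin r)
  top : ∀ (i : Fin r) (j : Fin (N + 1)),
    V 0 j = some i ↔ (j : ℕ) = lam i + (r - 1 - (i : ℕ))
  bottom : ∀ j, V (Fin.last r) j = none
  left : ∀ i, H i 0 = none
  right : ∀ i : Fin r, H i (Fin.last (N + 1)) = some (w⁻¹ i)
  adm : ∀ (i : Fin r) (j : Fin (N + 1)),
    admC r (H i ⟨N - (j : ℕ), by omega⟩) (V i.castSucc j)
      (H i ⟨N - (j : ℕ) + 1, by omega⟩) (V i.succ j)

/-- The Boltzmann weight of a colored state: a vertex in row `i` contributes `z_i`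
exactly when the edge to its left is colored, otherwise `1`. -/
noncomputable def cweight {r N : ℕ} {lam : Fin r → ℕ} {w : Equiv.Perm (Fin r)}
    (s : CState r N lam w) : LP r :=
  ∏ i : Fin r, ∏ k : Fin (N + 1),
    if (s.H i k.castSucc).isSome then mono (Pi.single i 1) else 1

/-- The partition function of the colored five-vertex model `S_{z,λ,w}`. -/
noncomputable def Zcol (r N : ℕ) (lam : Fin r → ℕ) (w : Equiv.Perm (Fin r)) : LP r :=
  ∑ᶠ s : CState r N lam w, cweight s


/-! ### Auxiliary development for `ground_state` -/

section GroundAux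

variable {r N : ℕ}

/-- The column label of the top-boundary entry of colour `i`. -/
def gcol (lam : Fin r → ℕ) (i : Fin r) : ℕ := lam i + (r - 1 - (i : ℕ))

lemma gcol_lt {lam : Fin r → ℕ} (hdom : ∀ i j : Fin r, i ≤ j → lam j ≤ lam i)
    {i j : Fin r} (h : (i : ℕ) < (j : ℕ)) : gcol lam j < gcol lam i := by
  have h1 : lam j ≤ lam i := hdom i j (by exact_mod_cast h.le)
  have h2 := j.isLt
  unfold gcol; omega

lemma gcol_anti {lam : Fin r → ℕ} (hdom : ∀ i j : Fin r, i ≤ j → lam j ≤ lam i)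
    {i j : Fin r} (h : (i : ℕ) ≤ (j : ℕ)) : gcol lam j ≤ gcol lam i := by
  rcases eq_or_lt_of_le h with he | hl
  · have : i = j := Fin.ext he
    subst this; exact le_rfl
  · exact (gcol_lt hdom hl).le

lemma gcol_le {lam : Fin r → ℕ} (hr : 0 < r)
    (hdom : ∀ i j : Fin r, i ≤ j → lam j ≤ lam i)
    (hN : lam ⟨0, hr⟩ + r - 1 ≤ N) (i : Fin r) : gcol lam i ≤ N := by
  have h1 : lam i ≤ lam ⟨0, hr⟩ := hdom ⟨0, hr⟩ i (by simp [Fin.le_def])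
  have h2 := i.isLt
  unfold gcol; omega

lemma gcol_inj {lam : Fin r → ℕ} (hdom : ∀ i j : Fin r, i ≤ j → lam j ≤ lam i)
    {i j : Fin r} (h : gcol lam i = gcol lam j) : i = j := by
  rcases lt_trichotomy (i : ℕ) (j : ℕ) with hl | he | hg
  · exact absurd h.symm (gcol_lt hdom hl).ne
  · exact Fin.ext he
  · exact absurd h (gcol_lt hdom hg).ne

open Classical in
/-- The vertical edges of the ground state. -/
noncomputable def gV (lam : Fin r → ℕ) (k j : ℕ) : Option (Fin r) :=
  if h : ∃ c : Fin r, j = gcol lam c ∧ k ≤ (c : ℕ) then some h.choose else none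

lemma gV_some_iff {lam : Fin r → ℕ} (hdom : ∀ i j : Fin r, i ≤ j → lam j ≤ lam i)
    {k j : ℕ} {c : Fin r} :
    gV lam k j = some c ↔ (j = gcol lam c ∧ k ≤ (c : ℕ)) := by
  unfold gV
  split
  · rename_i h
    have hc := h.choose_spec
    constructor
    · intro he
      rw [Option.some_inj] at he
      rw [← he]; exact hc
    · rintro ⟨h1, h2⟩
      have : h.choose = c := gcol_inj hdom (by rw [← hc.1, ← h1])
      rw [this]
  · rename_i h
    simp only [false_iff, reduceCtorEq, false_iff]
    intro hc
    exact h ⟨c, hc⟩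

lemma gV_none {lam : Fin r → ℕ} {k j : ℕ}
    (h : ¬ ∃ c : Fin r, j = gcol lam c ∧ k ≤ (c : ℕ)) : gV lam k j = none := dif_neg h

lemma option_eq_of_some_iff {α : Type*} {x y : Option α}
    (h : ∀ c : α, x = some c ↔ y = some c) : x = y := by
  cases x with
  | none =>
    cases y with
    | none => rfl
    | some a => exact ((h a).2 rfl).symm ▸ rfl
  | some a => exact ((h a).1 rfl).symm

/-- The unique ground state. -/
noncomputable def gState (hr : 0 < r) (lam : Fin r → ℕ)
    (hdom : ∀ i j : Fin r, i ≤ j → lam j ≤ lam i) (hN : lam ⟨0, hr⟩ + r - 1 ≤ N) :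
    CState r N lam 1 where
  V := fun k j => gV lam (k : ℕ) (j : ℕ)
  H := fun i m => if N - gcol lam i < (m : ℕ) then some i else none
  top := by
    intro i j
    rw [gV_some_iff hdom]
    show _ ↔ (j : ℕ) = gcol lam i
    simp
  bottom := by
    intro j
    apply gV_none
    rintro ⟨c, -, hc⟩
    simp at hc
    exact absurd c.isLt (by omega)
  left := by
    intro i
    simp
  right := by
    intro i
    have h1 : gcol lam i ≤ N := gcol_le hr hdom hN i
    have h2 : N - gcol lam i < ((Fin.last (N+1) : Fin (N+2)) : ℕ) := by
      simp [Fin.last]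
    show (if N - gcol lam i < ((Fin.last (N+1) : Fin (N+2)) : ℕ) then some i else none) = _
    rw [if_pos h2]
    simp
  adm := by
    intro i j
    have hciN : gcol lam i ≤ N := gcol_le hr hdom hN i
    have hjN : (j : ℕ) ≤ N := by omega
    set ci := gcol lam i with hci
    have hb : ∀ c : Fin r, gV lam ((i.castSucc : Fin (r+1)) : ℕ) (j : ℕ) = some c ↔
        ((j : ℕ) = gcol lam c ∧ (i : ℕ) ≤ (c : ℕ)) := by
      intro c; rw [gV_some_iff hdom]; simp
    have hd : ∀ c : Fin r, gV lam ((i.succ : Fin (r+1)) : ℕ) (j : ℕ) = some c ↔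
        ((j : ℕ) = gcol lam c ∧ (i : ℕ) + 1 ≤ (c : ℕ)) := by
      intro c; rw [gV_some_iff hdom]; simp
    show admC r (if N - ci < N - (j:ℕ) then some i else none)
        (gV lam ((i.castSucc : Fin (r+1)) : ℕ) (j : ℕ))
        (if N - ci < N - (j:ℕ) + 1 then some i else none)
        (gV lam ((i.succ : Fin (r+1)) : ℕ) (j : ℕ))
    rcases lt_trichotomy (j : ℕ) ci with hlt | heq | hgt
    · rw [if_pos (by omega), if_pos (by omega)]
      by_cases hex : ∃ c : Fin r, (j : ℕ) = gcol lam c ∧ (i : ℕ) ≤ (c : ℕ)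
      · obtain ⟨c, hc1, hc2⟩ := hex
        have hic : (i : ℕ) < (c : ℕ) := by
          rcases eq_or_lt_of_le hc2 with he | hl
          · exact absurd hc1 (by rw [← Fin.ext he]; omega)
          · exact hl
        have hbv : gV lam ((i.castSucc : Fin (r+1)) : ℕ) (j : ℕ) = some c :=
          (hb c).2 ⟨hc1, hc2⟩
        have hdv : gV lam ((i.succ : Fin (r+1)) : ℕ) (j : ℕ) = some c :=
          (hd c).2 ⟨hc1, by omega⟩
        refine Or.inr (Or.inl ⟨i, c, rfl, hbv, ?_, ?_⟩)
        · rw [min_eq_left (le_of_lt (show i < c by exact_mod_cast hic))]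
        · rw [hdv, max_eq_right (le_of_lt (show i < c by exact_mod_cast hic))]
      · have hbv : gV lam ((i.castSucc : Fin (r+1)) : ℕ) (j : ℕ) = none := by
          apply gV_none; simpa using hex
        have hdv : gV lam ((i.succ : Fin (r+1)) : ℕ) (j : ℕ) = none := by
          apply gV_none
          rintro ⟨c, hc1, hc2⟩
          exact hex ⟨c, hc1, by simp at hc2; omega⟩
        exact Or.inr (Or.inr (Or.inl ⟨i, rfl, hbv, Or.inl ⟨rfl, hdv⟩⟩))
    · rw [if_neg (by omega), if_pos (by omega)]
      have hbv : gV lam ((i.castSucc : Fin (r+1)) : ℕ) (j : ℕ) = some i :=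
        (hb i).2 ⟨heq, le_rfl⟩
      have hdv : gV lam ((i.succ : Fin (r+1)) : ℕ) (j : ℕ) = none := by
        apply gV_none
        rintro ⟨c, hc1, hc2⟩
        have : c = i := gcol_inj hdom (by rw [← hc1, heq])
        subst this
        simp at hc2
      exact Or.inr (Or.inr (Or.inr ⟨i, rfl, hbv, rfl, hdv⟩))
    · rw [if_neg (by omega), if_neg (by omega)]
      have hbv : gV lam ((i.castSucc : Fin (r+1)) : ℕ) (j : ℕ) = none := by
        apply gV_none
        rintro ⟨c, hc1, hc2⟩
        simp at hc2
        have := gcol_anti hdom hc2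
        omega
      have hdv : gV lam ((i.succ : Fin (r+1)) : ℕ) (j : ℕ) = none := by
        apply gV_none
        rintro ⟨c, hc1, hc2⟩
        simp at hc2
        have := gcol_anti hdom (le_of_lt hc2)
        omega
      exact Or.inl ⟨rfl, hbv, rfl, hdv⟩


lemma admC_count {a b c d : Option (Fin r)} (h : admC r a b c d) (e : Fin r) :
    ((if a = some e then 1 else 0) + (if b = some e then 1 else 0) : ℕ)
      = (if c = some e then 1 else 0) + (if d = some e then 1 else 0) := by
  obtain ⟨ha, hb, hc, hd⟩ | ⟨x, y, ha, hb, hc, hd⟩ |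
      ⟨x, ha, hb, ⟨hc, hd⟩ | ⟨hc, hd⟩⟩ | ⟨x, ha, hb, hc, hd⟩ := h <;>
    subst ha <;> subst hb <;> subst hc <;> subst hd <;>
    simp only [reduceCtorEq, Option.some_inj, if_false] <;>
    try omega
  rcases le_total x y with hxy | hxy
  · rw [min_eq_left hxy, max_eq_right hxy]
  · rw [min_eq_right hxy, max_eq_left hxy]
    split_ifs <;> omega

section Uniq

variable {lam : Fin r → ℕ} (s : CState r N lam 1)

/-- The number of vertical edges of colour `c` between rows. -/
noncomputable def cnt (k : Fin (r + 1)) (c : Fin r) : ℕ :=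
  (Finset.univ.filter fun j : Fin (N + 1) => s.V k j = some c).card

lemma row_conserve (i : Fin r) (c : Fin r) :
    cnt s i.castSucc c = cnt s i.succ c + (if c = i then 1 else 0) := by
  classical
  set g : Fin (N + 2) → ℕ := fun m => if s.H i m = some c then 1 else 0 with hg
  have key : ∀ j : Fin (N + 1),
      g (j.rev.castSucc) + (if s.V i.castSucc j = some c then 1 else 0)
        = g (j.rev.succ) + (if s.V i.succ j = some c then 1 else 0) := by
    intro j
    have hrev : ((j.rev : Fin (N+1)) : ℕ) = N - (j : ℕ) := by
      have := j.isLt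
      simp only [Fin.rev]
      omega
    have h1 : (⟨N - (j : ℕ), by omega⟩ : Fin (N + 2)) = j.rev.castSucc := by
      apply Fin.ext; simp [hrev]
    have h2 : (⟨N - (j : ℕ) + 1, by omega⟩ : Fin (N + 2)) = j.rev.succ := by
      apply Fin.ext; simp [hrev]
    have := admC_count (s.adm i j) c
    rw [h1, h2] at this
    simpa [hg] using this
  have hsum := Finset.sum_congr rfl (fun j (_ : j ∈ Finset.univ) => key j)
  -- rewrite the two `g` sums
  have hrevsum1 : ∑ j : Fin (N + 1), g (j.rev.castSucc) = ∑ j : Fin (N + 1), g j.castSucc :=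
    Fintype.sum_bijective Fin.rev Fin.rev_bijective _ _ (fun j => rfl)
  have hrevsum2 : ∑ j : Fin (N + 1), g (j.rev.succ) = ∑ j : Fin (N + 1), g j.succ :=
    Fintype.sum_bijective Fin.rev Fin.rev_bijective _ _ (fun j => rfl)
  have hcast : ∑ j : Fin (N + 1), g j.castSucc + g (Fin.last (N + 1))
      = ∑ m : Fin (N + 2), g m := (Fin.sum_univ_castSucc g).symm
  have hsucc : g 0 + ∑ j : Fin (N + 1), g j.succ = ∑ m : Fin (N + 2), g m :=
    (Fin.sum_univ_succ g).symm
  have h0 : g 0 = 0 := by simp [hg, s.left i]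
  have hlast : g (Fin.last (N + 1)) = if c = i then 1 else 0 := by
    have := s.right i
    simp only [hg, this]
    simp only [Option.some_inj]
    by_cases h : c = i
    · subst h; simp
    · rw [if_neg, if_neg h]
      intro hh
      exact h (by simpa using hh.symm)
  have hc1 : cnt s i.castSucc c = ∑ j : Fin (N + 1),
      (if s.V i.castSucc j = some c then 1 else 0) := by
    unfold cnt; rw [Finset.card_filter]
  have hc2 : cnt s i.succ c = ∑ j : Fin (N + 1),
      (if s.V i.succ j = some c then 1 else 0) := by
    unfold cnt; rw [Finset.card_filter]
  rw [Finset.sum_add_distrib, Finset.sum_add_distrib] at hsum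
  rw [hrevsum1] at hsum
  rw [hrevsum2] at hsum
  rw [hc1, hc2]
  omega

lemma cnt_zero (hr : 0 < r) (hdom : ∀ i j : Fin r, i ≤ j → lam j ≤ lam i)
    (hN : lam ⟨0, hr⟩ + r - 1 ≤ N) (c : Fin r) : cnt s 0 c = 1 := by
  classical
  have hle : gcol lam c ≤ N := gcol_le hr hdom hN c
  have : (Finset.univ.filter fun j : Fin (N + 1) => s.V 0 j = some c)
      = {⟨gcol lam c, by omega⟩} := by
    ext j
    simp only [Finset.mem_filter, Finset.mem_univ, true_and, Finset.mem_singleton]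
    rw [s.top c j]
    constructor
    · intro h; exact Fin.ext h
    · intro h; subst h; rfl
  rw [cnt, this, Finset.card_singleton]

lemma cnt_formula (hr : 0 < r) (hdom : ∀ i j : Fin r, i ≤ j → lam j ≤ lam i)
    (hN : lam ⟨0, hr⟩ + r - 1 ≤ N) :
    ∀ (k : ℕ) (hk : k ≤ r) (c : Fin r),
      cnt s ⟨k, by omega⟩ c = if k ≤ (c : ℕ) then 1 else 0 := by
  intro k
  induction k with
  | zero =>
    intro hk c
    have h0 : (⟨0, by omega⟩ : Fin (r + 1)) = 0 := rfl
    rw [h0, cnt_zero s hr hdom hN c, if_pos (Nat.zero_le _)]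
  | succ k ih =>
    intro hk c
    have hkr : k < r := hk
    have hcs : (⟨k, by omega⟩ : Fin (r + 1)) = (⟨k, hkr⟩ : Fin r).castSucc := rfl
    have hss : (⟨k + 1, by omega⟩ : Fin (r + 1)) = (⟨k, hkr⟩ : Fin r).succ := rfl
    have hrc := row_conserve s ⟨k, hkr⟩ c
    rw [← hcs, ← hss] at hrc
    rw [ih (by omega) c] at hrc
    by_cases hc : c = (⟨k, hkr⟩ : Fin r)
    · have hcv : (c : ℕ) = k := by rw [hc]
      rw [if_pos hc] at hrc
      rw [if_pos (by omega)] at hrc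
      rw [if_neg (by omega)]
      omega
    · have hcv : (c : ℕ) ≠ k := fun h => hc (Fin.ext h)
      rw [if_neg hc] at hrc
      by_cases hkc : k ≤ (c : ℕ)
      · rw [if_pos hkc] at hrc
        rw [if_pos (by omega)]
        omega
      · rw [if_neg hkc] at hrc
        rw [if_neg (by omega)]
        omega

lemma no_color_below (hr : 0 < r) (hdom : ∀ i j : Fin r, i ≤ j → lam j ≤ lam i)
    (hN : lam ⟨0, hr⟩ + r - 1 ≤ N) (i : Fin r) (j : Fin (N + 1)) :
    s.V i.succ j ≠ some i := by
  classical
  have hf := cnt_formula s hr hdom hN ((i : ℕ) + 1) (by omega) i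
  rw [if_neg (by omega)] at hf
  have hss : (⟨(i : ℕ) + 1, by omega⟩ : Fin (r + 1)) = i.succ := rfl
  rw [hss] at hf
  intro h
  have : j ∈ (Finset.univ.filter fun j : Fin (N + 1) => s.V i.succ j = some i) := by
    simp [h]
  unfold cnt at hf
  rw [Finset.card_eq_zero] at hf
  rw [hf] at this
  exact absurd this (Finset.notMem_empty j)


set_option maxHeartbeats 2000000 in
lemma scan (hr : 0 < r) (hdom : ∀ i j : Fin r, i ≤ j → lam j ≤ lam i)
    (hN : lam ⟨0, hr⟩ + r - 1 ≤ N) (i : Fin r)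
    (hrow : ∀ (j : Fin (N + 1)) (c : Fin r),
      s.V i.castSucc j = some c ↔ ((j : ℕ) = gcol lam c ∧ (i : ℕ) ≤ (c : ℕ))) :
    (∀ (m : ℕ) (hm : m ≤ N + 1), s.H i ⟨m, by omega⟩ =
        if N - gcol lam i < m then some i else none) ∧
    (∀ (j : Fin (N + 1)) (c : Fin r),
      s.V i.succ j = some c ↔ ((j : ℕ) = gcol lam c ∧ (i : ℕ) + 1 ≤ (c : ℕ))) := by
  classical
  have hciN : gcol lam i ≤ N := gcol_le hr hdom hN i
  set ci := gcol lam i with hci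
  have hrow_none : ∀ j : Fin (N + 1),
      (¬ ∃ c : Fin r, (j : ℕ) = gcol lam c ∧ (i : ℕ) ≤ (c : ℕ)) →
      s.V i.castSucc j = none := by
    intro j h
    cases hv : s.V i.castSucc j with
    | none => rfl
    | some c => exact absurd ⟨c, (hrow j c).1 hv⟩ h
  have Hpart : ∀ (m : ℕ) (hm : m ≤ N + 1), s.H i ⟨m, by omega⟩ =
      if N - ci < m then some i else none := by
    intro m
    induction m with
    | zero =>
      intro hm
      rw [if_neg (by omega)]
      exact s.left i
    | succ m ih =>
      intro hm
      have hm' : m ≤ N := by omega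
      have hadm := s.adm i ⟨N - m, by omega⟩
      have hval : N - ((⟨N - m, by omega⟩ : Fin (N + 1)) : ℕ) = m := by
        show N - (N - m) = m; omega
      simp only [hval] at hadm
      rcases lt_trichotomy m (N - ci) with h1 | h1 | h1
      · -- left of the path: everything +
        have haval : s.H i ⟨m, by omega⟩ = none := by
          rw [ih (by omega), if_neg (by omega)]
        have hbval : s.V i.castSucc ⟨N - m, by omega⟩ = none := by
          apply hrow_none
          rintro ⟨c, hc1, hc2⟩
          have hc1' : N - m = gcol lam c := hc1
          have := gcol_anti hdom hc2
          omega
        rw [haval, hbval] at hadm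
        rw [if_neg (by omega)]
        rcases hadm with ⟨-, -, hcv, -⟩ | ⟨x, y, hax, -, -, -⟩ | ⟨x, hax, -, -⟩ |
          ⟨x, -, hbx, -, -⟩
        · exact hcv
        · exact absurd hax (by simp)
        · exact absurd hax (by simp)
        · exact absurd hbx (by simp)
      · -- the turning point
        have haval : s.H i ⟨m, by omega⟩ = none := by
          rw [ih (by omega), if_neg (by omega)]
        have hbval : s.V i.castSucc ⟨N - m, by omega⟩ = some i := by
          refine (hrow _ i).2 ⟨?_, le_rfl⟩
          show N - m = ci
          omega
        rw [haval, hbval] at hadm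
        rw [if_pos (by omega)]
        rcases hadm with ⟨-, hbx, -, -⟩ | ⟨x, y, hax, -, -, -⟩ | ⟨x, hax, -, -⟩ |
          ⟨x, -, hbx, hcv, -⟩
        · exact absurd hbx (by simp)
        · exact absurd hax (by simp)
        · exact absurd hax (by simp)
        · rw [Option.some_inj] at hbx
          rw [hcv, ← hbx]
      · -- right of the turning point: the path continues horizontally
        have haval : s.H i ⟨m, by omega⟩ = some i := by
          rw [ih (by omega), if_pos (by omega)]
        have hjlt : N - m < ci := by omega
        rw [if_pos (by omega)]
        by_cases hex : ∃ c : Fin r, (N - m : ℕ) = gcol lam c ∧ (i : ℕ) ≤ (c : ℕ)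
        · obtain ⟨c, hc1, hc2⟩ := hex
          have hic : (i : ℕ) < (c : ℕ) := by
            rcases eq_or_lt_of_le hc2 with he | hl
            · exfalso
              have : i = c := Fin.ext he
              rw [← this] at hc1
              omega
            · exact hl
          have hbval : s.V i.castSucc ⟨N - m, by omega⟩ = some c :=
            (hrow _ c).2 ⟨hc1, hc2⟩
          rw [haval, hbval] at hadm
          rcases hadm with ⟨hax, -, -, -⟩ | ⟨x, y, hax, hby, hcv, -⟩ | ⟨x, -, hbx, -⟩ |
            ⟨x, hax, -, -, -⟩
          · exact absurd hax (by simp)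
          · rw [Option.some_inj] at hax hby
            rw [hcv, ← hax, ← hby, min_eq_left (le_of_lt (show i < c by exact_mod_cast hic))]
          · exact absurd hbx (by simp)
          · exact absurd hax (by simp)
        · have hbval : s.V i.castSucc ⟨N - m, by omega⟩ = none := hrow_none _ hex
          rw [haval, hbval] at hadm
          rcases hadm with ⟨hax, -, -, -⟩ | ⟨x, y, -, hby, -, -⟩ |
            ⟨x, hax, -, ⟨hcv, -⟩ | ⟨-, hdv⟩⟩ | ⟨x, hax, -, -, -⟩
          · exact absurd hax (by simp)
          · exact absurd hby (by simp)
          · rw [Option.some_inj] at hax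
            rw [hcv, ← hax]
          · rw [Option.some_inj] at hax
            rw [← hax] at hdv
            exact absurd hdv (no_color_below s hr hdom hN i _)
          · exact absurd hax (by simp)
  refine ⟨Hpart, ?_⟩
  intro j c
  have hj := j.isLt
  have ha := Hpart (N - (j : ℕ)) (by omega)
  have hc' := Hpart (N - (j : ℕ) + 1) (by omega)
  have hadm := s.adm i j
  rcases lt_trichotomy (j : ℕ) ci with h1 | h1 | h1
  · rw [if_pos (by omega)] at ha
    by_cases hex : ∃ c' : Fin r, (j : ℕ) = gcol lam c' ∧ (i : ℕ) ≤ (c' : ℕ)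
    · obtain ⟨c', hc1, hc2⟩ := hex
      have hic : (i : ℕ) < (c' : ℕ) := by
        rcases eq_or_lt_of_le hc2 with he | hl
        · exfalso
          have : i = c' := Fin.ext he
          rw [← this] at hc1
          omega
        · exact hl
      have hb := (hrow j c').2 ⟨hc1, hc2⟩
      rw [ha, hb] at hadm
      have hdval : s.V i.succ j = some c' := by
        rcases hadm with ⟨hax, -, -, -⟩ | ⟨x, y, hax, hby, -, hdv⟩ | ⟨x, -, hbx, -⟩ |
          ⟨x, hax, -, -, -⟩
        · exact absurd hax (by simp)
        · rw [Option.some_inj] at hax hby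
          rw [hdv, ← hax, ← hby, max_eq_right (le_of_lt (show i < c' by exact_mod_cast hic))]
        · exact absurd hbx (by simp)
        · exact absurd hax (by simp)
      rw [hdval]
      constructor
      · intro h
        rw [Option.some_inj] at h
        subst h
        exact ⟨hc1, by omega⟩
      · rintro ⟨h1', -⟩
        have : c = c' := gcol_inj hdom (by rw [← h1', ← hc1])
        rw [this]
    · have hb := hrow_none j hex
      rw [ha, hb] at hadm
      have hdval : s.V i.succ j = none := by
        rcases hadm with ⟨hax, -, -, -⟩ | ⟨x, y, -, hby, -, -⟩ |
          ⟨x, hax, -, ⟨-, hdv⟩ | ⟨-, hdv⟩⟩ | ⟨x, hax, -, -, -⟩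
        · exact absurd hax (by simp)
        · exact absurd hby (by simp)
        · exact hdv
        · rw [Option.some_inj] at hax
          rw [← hax] at hdv
          exact absurd hdv (no_color_below s hr hdom hN i _)
        · exact absurd hax (by simp)
      rw [hdval]
      simp only [reduceCtorEq, false_iff]
      rintro ⟨h1', h2'⟩
      exact hex ⟨c, h1', by omega⟩
  · rw [if_neg (by omega)] at ha
    have hb := (hrow j i).2 ⟨h1, le_rfl⟩
    rw [ha, hb] at hadm
    have hdval : s.V i.succ j = none := by
      rcases hadm with ⟨-, hbx, -, -⟩ | ⟨x, y, hax, -, -, -⟩ | ⟨x, hax, -, -⟩ |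
        ⟨x, -, -, -, hdv⟩
      · exact absurd hbx (by simp)
      · exact absurd hax (by simp)
      · exact absurd hax (by simp)
      · exact hdv
    rw [hdval]
    simp only [reduceCtorEq, false_iff]
    rintro ⟨h1', h2'⟩
    have : c = i := gcol_inj hdom (by omega)
    rw [this] at h2'
    omega
  · rw [if_neg (by omega)] at ha
    have hb := hrow_none j (by
      rintro ⟨c', hc1, hc2⟩
      have := gcol_anti hdom hc2
      omega)
    rw [ha, hb] at hadm
    have hdval : s.V i.succ j = none := by
      rcases hadm with ⟨-, -, -, hdv⟩ | ⟨x, y, hax, -, -, -⟩ | ⟨x, hax, -, -⟩ |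
        ⟨x, -, hbx, -, -⟩
      · exact hdv
      · exact absurd hax (by simp)
      · exact absurd hax (by simp)
      · exact absurd hbx (by simp)
    rw [hdval]
    simp only [reduceCtorEq, false_iff]
    rintro ⟨h1', h2'⟩
    have := gcol_anti hdom (show (i : ℕ) ≤ (c : ℕ) by omega)
    omega


lemma rows (hr : 0 < r) (hdom : ∀ i j : Fin r, i ≤ j → lam j ≤ lam i)
    (hN : lam ⟨0, hr⟩ + r - 1 ≤ N) :
    ∀ (k : ℕ) (hk : k ≤ r) (j : Fin (N + 1)) (c : Fin r),
      s.V ⟨k, by omega⟩ j = some c ↔ ((j : ℕ) = gcol lam c ∧ k ≤ (c : ℕ)) := by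
  intro k
  induction k with
  | zero =>
    intro hk j c
    constructor
    · intro h
      exact ⟨(s.top c j).1 h, Nat.zero_le _⟩
    · rintro ⟨h, -⟩
      exact (s.top c j).2 h
  | succ k ih =>
    intro hk j c
    have hkr : k < r := hk
    exact (scan s hr hdom hN ⟨k, hkr⟩ (fun j c => ih (by omega) j c)).2 j c

lemma state_ext {w : Equiv.Perm (Fin r)} {lam' : Fin r → ℕ} {s t : CState r N lam' w}
    (hV : s.V = t.V) (hH : s.H = t.H) : s = t := by
  cases s
  cases t
  cases hV
  cases hH
  rfl

lemma state_eq_gState (hr : 0 < r) (hdom : ∀ i j : Fin r, i ≤ j → lam j ≤ lam i)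
    (hN : lam ⟨0, hr⟩ + r - 1 ≤ N) : s = gState hr lam hdom hN := by
  have hrows := rows s hr hdom hN
  apply state_ext
  · funext k j
    apply option_eq_of_some_iff
    intro c
    have hk2 : (⟨(k : ℕ), by omega⟩ : Fin (r + 1)) = k := Fin.ext rfl
    rw [← hk2, hrows (k : ℕ) (by omega) j c]
    show _ ↔ gV lam (k : ℕ) (j : ℕ) = some c
    rw [gV_some_iff hdom]
  · funext i m
    have hrowi : ∀ (j : Fin (N + 1)) (c : Fin r),
        s.V i.castSucc j = some c ↔ ((j : ℕ) = gcol lam c ∧ (i : ℕ) ≤ (c : ℕ)) :=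
      fun j c => hrows (i : ℕ) (by omega) j c
    have hsc := (scan s hr hdom hN i hrowi).1 (m : ℕ) (by omega)
    have hm2 : (⟨(m : ℕ), by omega⟩ : Fin (N + 2)) = m := Fin.ext rfl
    rw [hm2] at hsc
    rw [hsc]
    rfl


lemma gState_weight (hr : 0 < r) (hdom : ∀ i j : Fin r, i ≤ j → lam j ≤ lam i)
    (hN : lam ⟨0, hr⟩ + r - 1 ≤ N) :
    cweight (gState (N := N) hr lam hdom hN)
      = mono (fun i => (lam i : ℤ) + rhoWt r i) := by
  classical
  unfold cweight
  have h1 : ∀ i : Fin r,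
      (∏ k : Fin (N + 1),
        if ((gState (N := N) hr lam hdom hN).H i k.castSucc).isSome
          then mono (Pi.single i 1) else 1)
        = mono (Pi.single i (gcol lam i : ℤ)) := by
    intro i
    have hci : gcol lam i ≤ N := gcol_le hr hdom hN i
    have hstep : ∀ k : Fin (N + 1),
        (if ((gState (N := N) hr lam hdom hN).H i k.castSucc).isSome
          then mono (Pi.single i (1 : ℤ)) else 1)
          = if N - gcol lam i < (k : ℕ) then mono (Pi.single i (1 : ℤ)) else 1 := by
      intro k
      show (if (if N - gcol lam i < ((k.castSucc : Fin (N + 2)) : ℕ) then some i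
          else none).isSome then mono (Pi.single i (1 : ℤ)) else 1) = _
      have hkk : ((k.castSucc : Fin (N + 2)) : ℕ) = (k : ℕ) := rfl
      rw [hkk]
      by_cases h : N - gcol lam i < (k : ℕ)
      · rw [if_pos h, if_pos h]
        simp
      · rw [if_neg h, if_neg h]
        simp
    rw [Finset.prod_congr rfl (fun k _ => hstep k)]
    rw [← Finset.prod_filter, Finset.prod_const]
    have hcard : (Finset.univ.filter fun k : Fin (N + 1) =>
        N - gcol lam i < (k : ℕ)).card = gcol lam i := by
      rw [Finset.card_filter]
      rw [Fin.sum_univ_eq_sum_range (fun k => if N - gcol lam i < k then 1 else 0)]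
      rw [← Finset.card_filter]
      have : (Finset.range (N + 1)).filter (fun k => N - gcol lam i < k)
          = Finset.Ico (N - gcol lam i + 1) (N + 1) := by
        ext k
        simp only [Finset.mem_filter, Finset.mem_range, Finset.mem_Ico]
        omega
      rw [this, Nat.card_Ico]
      omega
    rw [hcard]
    unfold mono
    simp only [AddMonoidAlgebra.ofCoeff_single]
    rw [AddMonoidAlgebra.single_pow, one_pow]
    congr 1
    funext x
    by_cases hx : x = i
    · subst hx
      simp
    · simp [Pi.single_apply, hx]
  rw [Finset.prod_congr rfl (fun i _ => h1 i)]
  unfold mono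
  simp only [AddMonoidAlgebra.ofCoeff_single]
  rw [AddMonoidAlgebra.prod_single, Finset.prod_const_one, Finset.univ_sum_single]
  have hfun : (fun i : Fin r => ((gcol lam i : ℕ) : ℤ))
      = fun i => (lam i : ℤ) + rhoWt r i := by
    funext i
    show ((lam i + (r - 1 - (i : ℕ)) : ℕ) : ℤ)
      = (lam i : ℤ) + ((r - 1 - (i : ℕ) : ℕ) : ℤ)
    push_cast
    ring
  rw [hfun]

end Uniq

end GroundAux

/-- The system `S_{z,λ,1}` (identity permutation boundary conditions) has exactly one
admissible state, and its Boltzmann weight is `z^{λ+ρ}`. -/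
theorem ground_state (r N : ℕ) (hr : 0 < r) (lam : Fin r → ℕ)
    (hdom : ∀ i j : Fin r, i ≤ j → lam j ≤ lam i) (hN : lam ⟨0, hr⟩ + r - 1 ≤ N) :
    (∃! _s : CState r N lam 1, True) ∧
    ∀ s : CState r N lam 1,
      cweight s = mono (fun i => (lam i : ℤ) + rhoWt r i) := by
  constructor
  · exact ⟨gState hr lam hdom hN, trivial, fun s _ => state_eq_gState s hr hdom hN⟩
  · intro s
    rw [state_eq_gState s hr hdom hN]
    exact gState_weight hr hdom hN
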